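/- arXiv:1506.06173 — 2 statements merged into one kernel-verified Lean document; each statement's English description precedes it below -/
import Mathlib

section
/- Let σ > 0 and L > 0. Define h(x) = (2πσ²)^{-1/2} exp(-x²/(2σ²)) and the wrapped density (Qh)(x) = Σ_{n∈ℤ} h(x + 2πLn). Then for every x ∈ ℝ, (Qh)(x) ≥ β/(2πL), where β = 1 - 2e^{-σ²/(2L²)}/(1 - e^{-σ²/(2L²)}). -/
open Real

section AuxA
open Real HurwitzZeta

lemma aux_geom_bound (t : ℝ) (ht : 0 < t) (θ : ℝ) :
    (∑' n : ℤ, exp (-(t * (n:ℝ) ^ 2)) * Real.cos (θ * n)) ≥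
      1 - 2 * exp (-t) / (1 - exp (-t)) := by
  set q : ℝ := exp (-t) with hq
  have hq0 : 0 < q := exp_pos _
  have hq1 : q < 1 := exp_lt_one_iff.mpr (by linarith)
  set f : ℤ → ℝ := fun n ↦ exp (-(t * (n:ℝ) ^ 2)) * Real.cos (θ * n) with hf
  have hb : ∀ n : ℤ, |f n| ≤ q ^ n.natAbs := by
    intro n
    have h1 : |f n| ≤ exp (-(t * (n:ℝ) ^ 2)) := by
      rw [abs_mul, abs_of_pos (exp_pos _)]
      calc exp (-(t * (n:ℝ)^2)) * |Real.cos (θ * n)| ≤ exp (-(t * (n:ℝ)^2)) * 1 := by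
            exact mul_le_mul_of_nonneg_left (Real.abs_cos_le_one _) (exp_pos _).le
        _ = _ := mul_one _
    have h2 : exp (-(t * (n:ℝ) ^ 2)) ≤ q ^ n.natAbs := by
      rw [hq, ← Real.exp_nat_mul]
      apply exp_le_exp.mpr
      have h3 : ((n.natAbs : ℝ))^2 = (n:ℝ)^2 := by
        rw [Nat.cast_natAbs, Int.cast_abs, sq_abs]
      have h5 : (n.natAbs : ℝ) ≤ ((n.natAbs:ℝ))^2 := by
        exact_mod_cast Nat.le_self_pow two_ne_zero n.natAbs
      nlinarith [mul_le_mul_of_nonneg_left (h5.trans_eq h3) ht.le]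
    exact h1.trans h2
  have sgeo : Summable (fun n : ℕ ↦ q ^ n) := summable_geometric_of_lt_one hq0.le hq1
  have hble : ∀ m : ℤ, ∀ n : ℕ, m.natAbs = n + 1 → -(q^(n+1)) ≤ f m := by
    intro m n hmn
    have := hb m
    rw [hmn] at this
    linarith [abs_le.mp this]
  have s1 : Summable (fun n : ℕ ↦ f n) := by
    apply Summable.of_norm_bounded sgeo
    intro n
    simpa using hb n
  have s2 : Summable (fun n : ℕ ↦ f (-((n:ℤ)+1))) := by
    apply Summable.of_norm_bounded sgeo
    intro n
    refine le_trans (by simpa using hb (-((n:ℤ)+1))) ?_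
    exact pow_le_pow_of_le_one hq0.le hq1.le (by omega)
  have sgeo1 : Summable (fun n : ℕ ↦ -(q ^ (n+1))) :=
    ((sgeo.mul_left q).congr (fun n => by rw [pow_succ]; ring)).neg
  have hgeosum : ∑' n : ℕ, -(q ^ (n+1)) = -(q / (1 - q)) := by
    rw [tsum_neg, neg_inj]
    calc ∑' n : ℕ, q ^ (n+1) = ∑' n : ℕ, q * q ^ n := by
          exact tsum_congr fun n => by rw [pow_succ]; ring
      _ = q * (1 - q)⁻¹ := by rw [tsum_mul_left, tsum_geometric_of_lt_one hq0.le hq1]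
      _ = q / (1 - q) := by ring
  have hsplit : (∑' n : ℤ, f n) = (∑' n : ℕ, f n) + ∑' n : ℕ, f (-((n:ℤ)+1)) :=
    tsum_of_nat_of_neg_add_one s1 s2
  have h0 : f ((0:ℕ):ℤ) = 1 := by simp [hf]
  have hpos : (∑' n : ℕ, f n) ≥ 1 - q / (1 - q) := by
    rw [Summable.tsum_eq_zero_add s1, h0]
    have h6 : (∑' n : ℕ, f ((n:ℕ)+1:ℕ)) ≥ ∑' n : ℕ, -(q ^ (n+1)) := by
      apply Summable.tsum_le_tsum _ sgeo1 (s1.comp_injective (add_left_injective 1))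
      intro n
      exact hble _ n (by show ((n:ℤ)+1).natAbs = n+1; omega)
    rw [hgeosum] at h6
    linarith
  have hneg : (∑' n : ℕ, f (-((n:ℤ)+1))) ≥ -(q / (1 - q)) := by
    rw [← hgeosum]
    apply Summable.tsum_le_tsum _ sgeo1 s2
    intro n
    apply hble _ n
    omega
  have hring : 2 * q / (1 - q) = q / (1-q) + q / (1-q) := by ring
  rw [ge_iff_le, hring, hsplit]
  linarith

lemma aux_cosKernel_eq (c : ℝ) {s : ℝ} (hs : 0 < s) :
    cosKernel (c : UnitAddCircle) s
      = ∑' n : ℤ, exp (-(π * s * (n:ℝ) ^ 2)) * Real.cos ((2 * π * c) * n) := by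
  have h := (hasSum_int_cosKernel c hs).mapL Complex.reCLM
  have h2 : ∀ n : ℤ, Complex.reCLM (Complex.exp (2 * π * Complex.I * c * n)
      * (exp (-π * (n:ℝ) ^ 2 * s) : ℝ))
      = exp (-(π * s * (n:ℝ) ^ 2)) * Real.cos ((2 * π * c) * n) := by
    intro n
    have hre : (2 * (π:ℂ) * Complex.I * c * n).re = 0 := by simp
    have him : (2 * (π:ℂ) * Complex.I * c * n).im = (2 * π * c) * n := by simp
    rw [Complex.reCLM_apply, Complex.mul_re, Complex.ofReal_re, Complex.ofReal_im, mul_zero,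
      sub_zero, Complex.exp_re, hre, him, Real.exp_zero, one_mul]
    rw [mul_comm]
    congr 1
    ring_nf
  have h3 := (h.congr_fun (fun n => (h2 n).symm)).tsum_eq
  simp only [Complex.reCLM_apply, Complex.ofReal_re] at h3
  exact h3.symm

end AuxA

/-- **Spreading of a wrapped Gaussian.** For `σ, L > 0`, the Gaussian density
`h(x) = (2πσ²)^{-1/2} exp(-x²/(2σ²))` wrapped onto the torus of length `2πL`,
`(Qh)(x) = ∑_{n ∈ ℤ} h(x + 2πLn)`, satisfies `(Qh)(x) ≥ β/(2πL)` for every `x`,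
where `1 - β = 2 e^{-σ²/(2L²)} / (1 - e^{-σ²/(2L²)})`. -/
theorem wrapped_gaussian_lower_bound (σ L : ℝ) (hσ : 0 < σ) (hL : 0 < L)
    (h : ℝ → ℝ) (hdef : ∀ x, h x = (2 * π * σ ^ 2) ^ (-(1:ℝ)/2) * exp (-x ^ 2 / (2 * σ ^ 2)))
    (β : ℝ)
    (hβ : β = 1 - 2 * exp (-σ ^ 2 / (2 * L ^ 2)) / (1 - exp (-σ ^ 2 / (2 * L ^ 2)))) :
    ∀ x : ℝ, (∑' n : ℤ, h (x + 2 * π * L * n)) ≥ β / (2 * π * L) := by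
  intro x
  have hπ : 0 < π := pi_pos
  set t : ℝ := 2 * π * L ^ 2 / σ ^ 2 with hts
  have ht : 0 < t := by positivity
  set c : ℝ := x / (2 * π * L) with hc
  set s : ℝ := σ ^ 2 / (2 * π * L ^ 2) with hsd
  have hs : 0 < s := by positivity
  have hst : 1 / t = s := by rw [hts, hsd]; field_simp
  -- each term of the wrapped sum
  have hterm : ∀ n : ℤ, h (x + 2 * π * L * n)
      = (2 * π * σ ^ 2) ^ (-(1:ℝ)/2) * exp (-π * ((n:ℝ) + c) ^ 2 * t) := by
    intro n
    rw [hdef]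
    congr 2
    rw [hc, hts]
    field_simp
    ring
  -- the sum equals the even kernel
  have hsum : (∑' n : ℤ, h (x + 2 * π * L * n))
      = (2 * π * σ ^ 2) ^ (-(1:ℝ)/2) * HurwitzZeta.evenKernel (c : UnitAddCircle) t := by
    rw [tsum_congr hterm, tsum_mul_left, (HurwitzZeta.hasSum_int_evenKernel c ht).tsum_eq]
  rw [hsum, HurwitzZeta.evenKernel_functional_equation, hst]
  -- constant evaluation
  have hconst : (2 * π * σ ^ 2) ^ (-(1:ℝ)/2) * (1 / t ^ ((1:ℝ)/2)) = 1 / (2 * π * L) := by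
    have h1 : (0:ℝ) ≤ 2 * π * σ ^ 2 := by positivity
    rw [show (-(1:ℝ)/2) = -(1/2 : ℝ) by norm_num, Real.rpow_neg h1, one_div, one_div,
      ← mul_inv, ← Real.mul_rpow h1 ht.le]
    have h2 : 2 * π * σ ^ 2 * t = (2 * π * L) ^ (2:ℕ) := by
      rw [hts]; field_simp
    rw [h2, ← Real.rpow_natCast (2 * π * L) 2, ← Real.rpow_mul (by positivity)]
    norm_num
  rw [← mul_assoc, hconst]
  -- lower bound on the cosine kernel
  have hK : HurwitzZeta.cosKernel (c : UnitAddCircle) s ≥ β := by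
    have ht0 : 0 < π * s := by positivity
    have hps : π * s = σ ^ 2 / (2 * L ^ 2) := by rw [hsd]; field_simp
    rw [aux_cosKernel_eq c hs, hβ, neg_div, ← hps]
    exact aux_geom_bound (π * s) ht0 (2 * π * c)
  calc β / (2 * π * L) ≤ HurwitzZeta.cosKernel (c : UnitAddCircle) s / (2 * π * L) := by
        gcongr
    _ = 1 / (2 * π * L) * HurwitzZeta.cosKernel (c : UnitAddCircle) s := by ring
end

section
/- Suppose there exist functions α : (0, πL] → ℝ⁺ and β ∈ L¹([0,∞); ℝ⁺) such that for every z ∈ (0, πL] there are two standard Brownian motions W¹, W² on the torus 𝕋 = ℝ/(2πLℤ) with a common filtration, |W¹_0 - W²_0|_𝕋 = z, and E[|W¹_t - W²_t|²_𝕋] ≤ α(z)² β(t) for all t ≥ 0. Then there is a constant c > 0 depending only on L such that α(z) ≥ c ‖β‖_{L¹}^{-1/2} √z for all z ∈ (0, πL]. -/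
open Real MeasureTheory ProbabilityTheory
open scoped ENNReal NNReal

noncomputable section BMAuxAll

namespace BMAux


def QQ (L x : ℝ) : ℝ := ‖(x : AddCircle (2 * π * L))‖

def AA (L : ℝ) : ℝ := (π * L)^3 / 6

def gg (L r : ℝ) : ℝ := AA L * r - r^4 / 24

def ss (L x : ℝ) : ℝ := (AA L - (QQ L x)^3 / 6) * Real.sign (Real.sin (x / L))

variable {L : ℝ}

lemma p_pos (hL : 0 < L) : 0 < 2 * π * L := by positivity

lemma P_pos (hL : 0 < L) : 0 < π * L := by positivity

lemma QQ_nonneg (L x : ℝ) : 0 ≤ QQ L x := norm_nonneg _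

lemma QQ_eq (L x : ℝ) : QQ L x = |x - round ((2*π*L)⁻¹ * x) * (2*π*L)| :=
  AddCircle.norm_eq _

lemma QQ_le_half (hL : 0 < L) (x : ℝ) : QQ L x ≤ π * L := by
  have h := AddCircle.norm_le_half_period (2*π*L) (x := (x : AddCircle (2*π*L))) (p_pos hL).ne'
  rw [abs_of_pos (p_pos hL)] at h
  calc QQ L x ≤ (2*π*L)/2 := h
  _ = π * L := by ring

lemma QQ_neg (L x : ℝ) : QQ L (-x) = QQ L x := by
  unfold QQ
  have : ((-x : ℝ) : AddCircle (2*π*L)) = -((x:ℝ) : AddCircle (2*π*L)) := rfl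
  rw [this, norm_neg]

lemma QQ_add_int_mul (hL : 0 < L) (x : ℝ) (k : ℤ) :
    QQ L (x + k * (2*π*L)) = QQ L x := by
  have hp : (2*π*L) ≠ 0 := (p_pos hL).ne'
  rw [QQ_eq, QQ_eq]
  have h1 : (2*π*L)⁻¹ * (x + k * (2*π*L)) = (2*π*L)⁻¹ * x + k := by field_simp
  rw [h1, round_add_intCast]
  congr 1
  push_cast
  ring

lemma QQ_of_abs_le (hL : 0 < L) {y : ℝ} (h : |y| ≤ π * L) : QQ L y = |y| := by
  have hp : (0:ℝ) < 2*π*L := p_pos hL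
  have hP : (0:ℝ) < π*L := P_pos hL
  obtain ⟨h1, h2⟩ := abs_le.mp h
  have hy' : ((2*π*L)⁻¹*y)*(2*π*L) = y := by field_simp
  have hu1 : -(1/2) ≤ (2*π*L)⁻¹ * y := by
    rw [← mul_le_mul_iff_left₀ hp, hy']; linarith
  have hu2 : (2*π*L)⁻¹ * y ≤ 1/2 := by
    rw [← mul_le_mul_iff_left₀ hp, hy']; linarith
  rcases lt_or_eq_of_le hu2 with hlt | heq
  · have hr : round ((2*π*L)⁻¹ * y) = 0 := round_eq_zero_iff.mpr ⟨hu1, hlt⟩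
    rw [QQ_eq, hr]
    simp
  · have hy : y = (π*L) := by rw [← hy', heq]; ring
    have hr : round ((2*π*L)⁻¹ * y) = 1 := by rw [heq, round_eq]; norm_num
    rw [QQ_eq, hr, hy]
    push_cast
    rw [abs_of_nonpos (by linarith), abs_of_nonneg hP.le]
    ring

lemma QQ_upper (hL : 0 < L) {y : ℝ} (h1 : π * L ≤ y) (h2 : y ≤ 2*(π*L)) :
    QQ L y = 2*(π*L) - y := by
  have hP : (0:ℝ) < π*L := P_pos hL
  have h0 : QQ L y = QQ L (y - 2*π*L) := by
    calc QQ L y = QQ L ((y - 2*π*L) + (1:ℤ)*(2*π*L)) := by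
          apply congrArg (QQ L); push_cast; ring
    _ = QQ L (y - 2*π*L) := QQ_add_int_mul hL _ 1
  have h2' : |y - 2*π*L| ≤ π*L := abs_le.mpr ⟨by linarith, by linarith⟩
  rw [h0, QQ_of_abs_le hL h2', abs_of_nonpos (by linarith)]
  ring

lemma AA_pos (hL : 0 < L) : 0 < AA L := by unfold AA; positivity

lemma gg_nonneg (hL : 0 < L) {r : ℝ} (h0 : 0 ≤ r) (h1 : r ≤ π * L) : 0 ≤ gg L r := by
  have hP := P_pos hL
  have h3 : r^3 ≤ (π*L)^3 := pow_le_pow_left₀ h0 h1 3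
  have h4 : r^4 ≤ (π*L)^3 * r := by nlinarith
  have h5 : 0 ≤ (π*L)^3 * r := by positivity
  unfold gg AA
  nlinarith

lemma gg_le_lin (hL : 0 < L) {r : ℝ} (h0 : 0 ≤ r) : gg L r ≤ AA L * r := by
  unfold gg
  nlinarith [pow_nonneg h0 4]

lemma gg_lower (hL : 0 < L) {r : ℝ} (h0 : 0 ≤ r) (h1 : r ≤ π * L) :
    (π*L)^3/8 * r ≤ gg L r := by
  have hP := P_pos hL
  have h3 : r^3 ≤ (π*L)^3 := pow_le_pow_left₀ h0 h1 3
  have h4 : r^4 ≤ (π*L)^3 * r := by nlinarith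
  unfold gg AA
  nlinarith

lemma ss_abs_le (hL : 0 < L) (x : ℝ) : |ss L x| ≤ AA L := by
  have h1 : 0 ≤ QQ L x := QQ_nonneg L x
  have h2 : QQ L x ≤ π * L := QQ_le_half hL x
  have h3 : |AA L - (QQ L x)^3/6| ≤ AA L := by
    rw [abs_le]
    have h4 : (QQ L x)^3 ≤ (π*L)^3 := pow_le_pow_left₀ h1 h2 3
    have h5 : 0 ≤ (QQ L x)^3 := pow_nonneg h1 3
    unfold AA
    constructor <;> nlinarith
  unfold ss
  rw [abs_mul]
  rcases Real.sign_apply_eq (Real.sin (x / L)) with h | h | h <;> rw [h]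
  · norm_num; exact h3
  · norm_num; exact (AA_pos hL).le
  · norm_num; exact h3

lemma measurable_real_sign : Measurable Real.sign := by
  unfold Real.sign
  exact Measurable.ite (measurableSet_lt measurable_id measurable_const) measurable_const
    (Measurable.ite (measurableSet_lt measurable_const measurable_id)
      measurable_const measurable_const)

lemma continuous_QQ (L : ℝ) : Continuous (QQ L) := by
  unfold QQ
  exact continuous_norm.comp (AddCircle.continuous_mk' _)

lemma measurable_ss (L : ℝ) : Measurable (ss L) := by
  unfold ss
  apply Measurable.mul
  · exact (measurable_const.sub (((continuous_QQ L).measurable.pow measurable_const).div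
      measurable_const))
  · exact measurable_real_sign.comp (Real.continuous_sin.comp (continuous_id.div_const L)).measurable

set_option maxHeartbeats 2000000 in
lemma star_core (hL : 0 < L) {r : ℝ} (h : ℝ) (hr0 : 0 ≤ r) (hrP : r ≤ π * L) :
    gg L r + ((AA L - r^3/6) * Real.sign (Real.sin (r/L))) * h - r^2/4*h^2 - (π*L)*|h|^3
      ≤ gg L (QQ L (r + h)) := by
  have hP : (0:ℝ) < π*L := P_pos hL
  have hQnn := QQ_nonneg L (r+h)
  have hQle := QQ_le_half hL (r+h)
  have hggQ : 0 ≤ gg L (QQ L (r + h)) := gg_nonneg hL hQnn hQle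
  rcases hr0.eq_or_lt with rfl | hrpos
  · -- r = 0
    have h1 : Real.sign (Real.sin (0/L)) = 0 := by
      rw [zero_div, Real.sin_zero, Real.sign_zero]
    rw [h1, mul_zero, zero_mul]
    have h2 : gg L 0 = 0 := by unfold gg; ring
    rw [h2]
    nlinarith [pow_nonneg (abs_nonneg h) 3]
  · -- 0 < r
    have hcoef : ((AA L - r^3/6) * Real.sign (Real.sin (r/L))) = AA L - r^3/6 := by
      rcases eq_or_lt_of_le hrP with hrP' | hrlt
      · rw [hrP']
        have hs : Real.sin ((π*L)/L) = 0 := by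
          rw [show (π*L)/L = π by field_simp]
          exact Real.sin_pi
        rw [hs, Real.sign_zero]
        unfold AA
        ring
      · have hsin : 0 < Real.sin (r/L) := by
          apply Real.sin_pos_of_pos_of_lt_pi
          · positivity
          · rw [div_lt_iff₀ hL]
            nlinarith
        rw [Real.sign_of_pos hsin, mul_one]
    rw [hcoef]
    have hcoef1 : 0 ≤ AA L - r^3/6 := by
      have h4 : r^3 ≤ (π*L)^3 := pow_le_pow_left₀ hr0 hrP 3
      unfold AA; linarith
    have hcoef2 : AA L - r^3/6 ≤ AA L := by
      have h5 : 0 ≤ r^3 := pow_nonneg hr0 3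
      linarith
    rcases le_or_gt |h| (π*L) with hsmall | hbig
    · -- |h| ≤ πL
      have hh1 : h ≤ π*L := le_of_abs_le hsmall
      have hh2 : -(π*L) ≤ h := by have := neg_abs_le h; linarith
      obtain ⟨y, hy⟩ : ∃ y, y = r + h := ⟨_, rfl⟩
      rw [← hy] at hQnn hQle hggQ ⊢
      have hyub : y ≤ 2*(π*L) := by rw [hy]; linarith
      have hTay : gg L y = gg L r + (AA L - r^3/6)*h - r^2/4*h^2 - r/6*h^3 - h^4/24 := by
        rw [hy]; unfold gg AA; ring
      have habs3 : |h|^3 = |h^3| := (abs_pow h 3).symm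
      have habs4 : h^4 = |h|^4 := by
        rw [show |h|^4 = |h^4| from (abs_pow h 4).symm, abs_of_nonneg (by positivity)]
      have hrem : gg L r + (AA L - r^3/6)*h - r^2/4*h^2 - (π*L)*|h|^3 ≤ gg L y := by
        rw [hTay]
        have e1 : r/6*h^3 ≤ (π*L)/6*|h|^3 := by
          rw [habs3]
          have e1a : h^3 ≤ |h^3| := le_abs_self _
          have e1b : 0 ≤ |h^3| := abs_nonneg _
          nlinarith
        have e2 : h^4/24 ≤ (π*L)/24*|h|^3 := by
          rw [habs4]
          have e2a : 0 ≤ |h|^3 := by positivity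
          nlinarith [abs_nonneg h]
        nlinarith [pow_nonneg (abs_nonneg h) 3]
      have hgQy : gg L y ≤ gg L (QQ L y) := by
        rcases le_or_gt y (π*L) with hyP | hyP
        · have hylb : -(π*L) ≤ y := by rw [hy]; linarith
          rw [QQ_of_abs_le hL (abs_le.mpr ⟨hylb, hyP⟩)]
          have h4 : |y|^4 = y^4 := by
            rw [show |y|^4 = |y^4| from (abs_pow y 4).symm, abs_of_nonneg (by positivity)]
          have h5 : y ≤ |y| := le_abs_self y
          unfold gg
          rw [h4]
          nlinarith [mul_le_mul_of_nonneg_left h5 (AA_pos hL).le]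
        · rw [QQ_upper hL hyP.le hyub]
          have hid : gg L (2*(π*L) - y) - gg L y = (π*L)*(y - π*L)^3/3 := by
            unfold gg AA; ring
          nlinarith [pow_nonneg (by linarith : (0:ℝ) ≤ y - π*L) 3]
      linarith
    · -- πL < |h|
      have hgr : gg L r ≤ AA L * (π*L) := by
        calc gg L r ≤ AA L * r := gg_le_lin hL hr0
        _ ≤ AA L * (π*L) := mul_le_mul_of_nonneg_left hrP (AA_pos hL).le
      have hsq : 0 ≤ r^2/4*h^2 := by positivity
      have hab : 0 ≤ |h| := abs_nonneg h
      have hh : (AA L - r^3/6)*h ≤ AA L * |h| := by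
        calc (AA L - r^3/6)*h ≤ |(AA L - r^3/6)*h| := le_abs_self _
        _ = |AA L - r^3/6| * |h| := abs_mul _ _
        _ = (AA L - r^3/6) * |h| := by rw [abs_of_nonneg hcoef1]
        _ ≤ AA L * |h| := by nlinarith
      have hA : AA L = (π*L)^3/6 := rfl
      have hhsq : (π*L)^2 < |h|^2 := by nlinarith
      have hh2 : (π*L)^3*|h| ≤ (π*L)*|h|^3 := by nlinarith [mul_le_mul_of_nonneg_left hhsq.le (mul_nonneg hP.le hab)]
      have hh3 : (π*L)^4 ≤ (π*L)^3*|h| := by nlinarith [mul_le_mul_of_nonneg_left hbig.le (pow_nonneg hP.le 3)]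
      have key : AA L * (π*L) + AA L * |h| ≤ (π*L)*|h|^3 := by
        rw [hA]
        have : 0 ≤ (π*L)*|h|^3 := by positivity
        nlinarith
      linarith

/-- The martingale step inequality for the test function, valid for all real `x, h`. -/
lemma star (hL : 0 < L) (x h : ℝ) :
    gg L (QQ L x) + ss L x * h - (QQ L x)^2/4*h^2 - (π*L)*|h|^3
      ≤ gg L (QQ L (x + h)) := by
  have hp : (0:ℝ) < 2*π*L := p_pos hL
  obtain ⟨k, hk⟩ : ∃ k : ℤ, k = round ((2*π*L)⁻¹ * x) := ⟨_, rfl⟩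
  obtain ⟨r, hr⟩ : ∃ r : ℝ, r = x - k * (2*π*L) := ⟨_, rfl⟩
  have hQx : QQ L x = |r| := by rw [QQ_eq, hr, hk]
  have hQxh : QQ L (x + h) = QQ L (r + h) := by
    calc QQ L (x+h) = QQ L ((r + h) + k * (2*π*L)) := by
          apply congrArg (QQ L); rw [hr]; ring
    _ = QQ L (r + h) := QQ_add_int_mul hL (r+h) k
  have hrabs : |r| ≤ π * L := by rw [← hQx]; exact QQ_le_half hL x
  have hsin : Real.sin (x / L) = Real.sin (r / L) := by
    have hL0 : L ≠ 0 := hL.ne'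
    calc Real.sin (x/L) = Real.sin (r/L + k * (2*π)) := by
          apply congrArg; rw [hr]; field_simp; ring
    _ = Real.sin (r/L) := Real.sin_add_int_mul_two_pi _ k
  have hss : ss L x = (AA L - |r|^3/6) * Real.sign (Real.sin (r/L)) := by
    unfold ss
    rw [hQx, hsin]
  rcases le_or_gt 0 r with hr0 | hrneg
  · have habs : |r| = r := abs_of_nonneg hr0
    rw [hQx, hQxh, hss, habs]
    exact star_core hL h hr0 (habs ▸ hrabs)
  · have habs : |r| = -r := abs_of_neg hrneg
    have hcore := star_core hL (r := -r) (-h) (by linarith) (habs ▸ hrabs)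
    rw [show -r + -h = -(r+h) by ring, QQ_neg] at hcore
    have hsgn : Real.sign (Real.sin (-r / L)) = - Real.sign (Real.sin (r/L)) := by
      rw [show -r/L = -(r/L) by ring, Real.sin_neg, Real.sign_neg]
    rw [hsgn, abs_neg] at hcore
    have e1 : (AA L - (-r)^3/6) * (-Real.sign (Real.sin (r/L))) * (-h)
        = (AA L - (-r)^3/6) * Real.sign (Real.sin (r/L)) * h := by ring
    have e2 : (-r)^2/4*(-h)^2 = (-r)^2/4*h^2 := by ring
    rw [e1, e2] at hcore
    rw [hQx, hQxh, hss, habs]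
    exact hcore



def K2 : ℝ := ∫ x, x^2 ∂(gaussianReal 0 1)

def K3 : ℝ := ∫ x, |x|^3 ∂(gaussianReal 0 1)

lemma int_abs_pow_gauss (n : ℕ) :
    Integrable (fun x : ℝ => |x|^n * rexp (-2⁻¹ * x^2)) := by
  have hb : (0:ℝ) < 2⁻¹ := by norm_num
  have hs : (-1:ℝ) < (n:ℝ) := lt_of_lt_of_le (by norm_num) (Nat.cast_nonneg n)
  have hIoi : IntegrableOn (fun x : ℝ => |x|^n * rexp (-2⁻¹ * x^2)) (Set.Ioi 0) := by
    have h := integrableOn_rpow_mul_exp_neg_mul_sq hb hs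
    apply h.congr_fun ?_ measurableSet_Ioi
    intro x hx
    have hax : |x| = x := abs_of_pos hx
    simp only [hax, Real.rpow_natCast]
  have hmeas : Measurable (fun x : ℝ => |x|^n * rexp (-2⁻¹ * x^2)) := by
    exact ((measurable_id.abs.pow measurable_const).mul
      (((measurable_id.pow measurable_const).const_mul (-2⁻¹)).exp))
  have hIio : IntegrableOn (fun x : ℝ => |x|^n * rexp (-2⁻¹ * x^2)) (Set.Iio 0) := by
    rw [← (Measure.measurePreserving_neg (volume : Measure ℝ)).integrableOn_comp_preimage
      (Homeomorph.neg ℝ).measurableEmbedding]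
    have hpre : (Neg.neg ⁻¹' (Set.Iio (0:ℝ))) = Set.Ioi 0 := by
      ext t; simp
    rw [hpre]
    apply hIoi.congr_fun ?_ measurableSet_Ioi
    intro x _
    simp only [Function.comp_def, abs_neg, neg_sq]
  rw [← integrableOn_univ, show (Set.univ : Set ℝ) = Set.Iio 0 ∪ Set.Ici 0 from
    (Set.Iio_union_Ici).symm, integrableOn_union, integrableOn_Ici_iff_integrableOn_Ioi]
  exact ⟨hIio, hIoi⟩

lemma pdf1 (x : ℝ) : gaussianPDFReal 0 1 x = (√(2*π))⁻¹ * rexp (-2⁻¹*x^2) := by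
  unfold gaussianPDFReal
  congr 1
  · norm_num
  · congr 1
    push_cast
    ring

lemma pdf1_nonneg (x : ℝ) : 0 ≤ gaussianPDFReal 0 1 x := gaussianPDFReal_nonneg 0 1 x

lemma gauss_density :
    gaussianReal 0 1 = (volume : Measure ℝ).withDensity
      (fun x => ((gaussianPDFReal 0 1 x).toNNReal : ℝ≥0∞)) := by
  rw [gaussianReal_of_var_ne_zero 0 one_ne_zero]
  rfl

lemma meas_pdfnn : Measurable (fun x => (gaussianPDFReal 0 1 x).toNNReal) :=
  (measurable_gaussianPDFReal 0 1).real_toNNReal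

lemma gauss_integral_eq (f : ℝ → ℝ) :
    ∫ x, f x ∂(gaussianReal 0 1) = ∫ x, gaussianPDFReal 0 1 x * f x := by
  rw [gauss_density, integral_withDensity_eq_integral_smul meas_pdfnn f]
  congr 1
  funext x
  simp only [NNReal.smul_def, smul_eq_mul, Real.coe_toNNReal _ (pdf1_nonneg x)]

lemma gauss_integrable_iff (f : ℝ → ℝ) :
    Integrable f (gaussianReal 0 1) ↔
      Integrable (fun x => gaussianPDFReal 0 1 x * f x) volume := by
  rw [gauss_density, integrable_withDensity_iff_integrable_smul meas_pdfnn]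
  constructor <;> intro h <;> apply h.congr <;> apply ae_of_all <;> intro x <;>
    simp only [NNReal.smul_def, smul_eq_mul, Real.coe_toNNReal _ (pdf1_nonneg x)]

lemma int_pow_gauss (n : ℕ) : Integrable (fun x : ℝ => |x|^n) (gaussianReal 0 1) := by
  rw [gauss_integrable_iff]
  apply Integrable.mono' ((int_abs_pow_gauss n).const_mul (√(2*π))⁻¹)
  · exact ((measurable_gaussianPDFReal 0 1).mul
      (measurable_id.abs.pow measurable_const)).aestronglyMeasurable
  · apply ae_of_all
    intro x
    apply le_of_eq
    rw [Real.norm_eq_abs, abs_of_nonneg (mul_nonneg (pdf1_nonneg x) (by positivity)), pdf1]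
    ring

lemma int_id_gauss : Integrable (fun x : ℝ => x) (gaussianReal 0 1) := by
  apply (int_pow_gauss 1).mono' measurable_id.aestronglyMeasurable
  apply ae_of_all
  intro x
  apply le_of_eq
  simp

lemma int_sq_gauss : Integrable (fun x : ℝ => x^2) (gaussianReal 0 1) := by
  apply (int_pow_gauss 2).mono'
    (measurable_id.pow measurable_const).aestronglyMeasurable
  apply ae_of_all
  intro x
  apply le_of_eq
  simp [abs_pow]

lemma int_cube_gauss : Integrable (fun x : ℝ => |x|^3) (gaussianReal 0 1) := int_pow_gauss 3

lemma gauss_map_neg :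
    Measure.map (fun x : ℝ => (-1) * x) (gaussianReal 0 1) = gaussianReal 0 1 := by
  rw [gaussianReal_map_const_mul (-1)]
  congr 1
  · ring
  · apply NNReal.coe_injective
    push_cast
    norm_num

lemma gauss_mean : ∫ x, x ∂(gaussianReal 0 1) = 0 := by
  have h1 : ∫ x, x ∂(gaussianReal 0 1) = ∫ x, (-1) * x ∂(gaussianReal 0 1) := by
    calc ∫ x, x ∂(gaussianReal 0 1)
        = ∫ y, y ∂(Measure.map (fun x : ℝ => (-1) * x) (gaussianReal 0 1)) := by
          rw [gauss_map_neg]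
    _ = ∫ x, (-1) * x ∂(gaussianReal 0 1) :=
          integral_map (measurable_id.const_mul (-1)).aemeasurable
            measurable_id.aestronglyMeasurable
  have h2 : ∫ x, (-1 : ℝ) * x ∂(gaussianReal 0 1) = - ∫ x, x ∂(gaussianReal 0 1) := by
    rw [integral_const_mul]
    ring
  rw [h2] at h1
  linarith

lemma K2_nonneg : 0 ≤ K2 := integral_nonneg (fun x => sq_nonneg x)

lemma K3_nonneg : 0 ≤ K3 := integral_nonneg (fun x => by positivity)

lemma K2_pos : 0 < K2 := by
  unfold K2
  rw [integral_pos_iff_support_of_nonneg_ae (ae_of_all _ (fun x => sq_nonneg x)) int_sq_gauss]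
  have hsupp : Function.support (fun x : ℝ => x^2) = {(0:ℝ)}ᶜ := by
    ext x
    simp [Function.mem_support, pow_eq_zero_iff]
  rw [hsupp]
  have h0 : (gaussianReal 0 1) {(0:ℝ)} = 0 :=
    (gaussianReal_absolutelyContinuous 0 one_ne_zero) (Real.volume_singleton)
  have : (gaussianReal 0 1) {(0:ℝ)}ᶜ = 1 := by
    rw [measure_compl (measurableSet_singleton 0) (measure_ne_top _ _), h0, measure_univ]
    simp
  rw [this]
  norm_num

lemma gauss_moments {Ω : Type} [m : MeasurableSpace Ω] (P : Measure Ω) [IsProbabilityMeasure P]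
    {X : Ω → ℝ} (hXm : Measurable X) {δ : ℝ} (hδ : 0 ≤ δ)
    (hmap : Measure.map X P = gaussianReal 0 (Real.toNNReal δ)) :
    (Integrable X P ∧ ∫ ω, X ω ∂P = 0) ∧
    (Integrable (fun ω => (X ω)^2) P ∧ ∫ ω, (X ω)^2 ∂P = δ * K2) ∧
    (Integrable (fun ω => |X ω|^3) P ∧ ∫ ω, |X ω|^3 ∂P = (√δ)^3 * K3) := by
  have hsc : Measure.map (fun x => √δ * x) (gaussianReal 0 1)
      = gaussianReal 0 (Real.toNNReal δ) := by
    rw [gaussianReal_map_const_mul]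
    congr 1
    · ring
    · apply NNReal.coe_injective
      push_cast
      rw [Real.sq_sqrt hδ, Real.coe_toNNReal _ hδ]
      ring
  have key : ∀ f : ℝ → ℝ, Measurable f →
      (Integrable (fun ω => f (X ω)) P ↔ Integrable (fun x => f (√δ * x)) (gaussianReal 0 1)) ∧
      (∫ ω, f (X ω) ∂P = ∫ x, f (√δ * x) ∂(gaussianReal 0 1)) := by
    intro f hf
    constructor
    · calc Integrable (fun ω => f (X ω)) P
          ↔ Integrable f (Measure.map X P) :=
            (integrable_map_measure (by rw [hmap]; exact hf.aestronglyMeasurable)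
              hXm.aemeasurable).symm
      _ ↔ Integrable f (Measure.map (fun x => √δ * x) (gaussianReal 0 1)) := by
            rw [hmap, hsc]
      _ ↔ Integrable (fun x => f (√δ * x)) (gaussianReal 0 1) :=
            integrable_map_measure (by rw [hsc, ← hmap]; exact hf.aestronglyMeasurable)
              (measurable_const_mul _).aemeasurable
    · calc ∫ ω, f (X ω) ∂P = ∫ y, f y ∂(Measure.map X P) :=
            (integral_map hXm.aemeasurable (by rw [hmap]; exact hf.aestronglyMeasurable)).symm
      _ = ∫ y, f y ∂(Measure.map (fun x => √δ * x) (gaussianReal 0 1)) := by rw [hmap, hsc]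
      _ = ∫ x, f (√δ * x) ∂(gaussianReal 0 1) :=
            integral_map (measurable_const_mul _).aemeasurable
              (by rw [hsc, ← hmap]; exact hf.aestronglyMeasurable)
  obtain ⟨hid_iff, hid_eq⟩ := key (fun x => x) measurable_id
  obtain ⟨hsq_iff, hsq_eq⟩ := key (fun x => x^2) (measurable_id.pow measurable_const)
  obtain ⟨hcb_iff, hcb_eq⟩ := key (fun x => |x|^3) (measurable_id.abs.pow measurable_const)
  have e_id : (fun x : ℝ => √δ * x) = (fun x : ℝ => √δ * x) := rfl
  have e_sq : (fun x : ℝ => (√δ * x)^2) = (fun x : ℝ => δ * x^2) := by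
    funext x
    rw [mul_pow, Real.sq_sqrt hδ]
  have e_cb : (fun x : ℝ => |√δ * x|^3) = (fun x : ℝ => (√δ)^3 * |x|^3) := by
    funext x
    rw [abs_mul, abs_of_nonneg (Real.sqrt_nonneg δ), mul_pow]
  refine ⟨⟨?_, ?_⟩, ⟨?_, ?_⟩, ⟨?_, ?_⟩⟩
  · exact hid_iff.mpr (int_id_gauss.const_mul _)
  · rw [hid_eq, integral_const_mul, gauss_mean, mul_zero]
  · refine hsq_iff.mpr ?_
    rw [e_sq]
    exact int_sq_gauss.const_mul _
  · rw [hsq_eq]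
    conv_lhs => rw [e_sq]
    rw [integral_const_mul]
    rfl
  · refine hcb_iff.mpr ?_
    rw [e_cb]
    exact int_cube_gauss.const_mul _
  · rw [hcb_eq]
    conv_lhs => rw [e_cb]
    rw [integral_const_mul]
    rfl

end BMAux

/-- `W` is a standard one-dimensional Brownian motion with respect to the filtration `𝒢`:
it is adapted with a.s. continuous paths, its increments `W_t - W_s` (for `0 ≤ s ≤ t`)
are centered Gaussians of variance `t - s`, and each increment is independent of `𝒢_s`.
(A Brownian motion on the torus `ℝ/(2πLℤ)` is represented by its real-valued lift.) -/
def IsBrownianMotion {Ω : Type} [m : MeasurableSpace Ω] (P : Measure Ω)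
    (𝒢 : Filtration ℝ m) (W : ℝ → Ω → ℝ) : Prop :=
  (∀ t, Measurable (W t)) ∧
  (∀ᵐ ω ∂P, Continuous fun t => W t ω) ∧
  Adapted 𝒢 W ∧
  (∀ s t : ℝ, 0 ≤ s → s ≤ t →
    Measure.map (fun ω => W t ω - W s ω) P = gaussianReal 0 (Real.toNNReal (t - s)) ∧
    Indep (MeasurableSpace.comap (fun ω => W t ω - W s ω) inferInstance) (𝒢 s) P)

namespace BMAux

lemma cube_abs_sub (a b : ℝ) : |a - b|^3 ≤ 4*|a|^3 + 4*|b|^3 := by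
  have h1 : |a - b| ≤ |a| + |b| := abs_sub _ _
  have h2 : |a - b|^3 ≤ (|a| + |b|)^3 :=
    pow_le_pow_left₀ (abs_nonneg _) h1 3
  have ha : 0 ≤ |a| := abs_nonneg a
  have hb : 0 ≤ |b| := abs_nonneg b
  have h3 : (|a| + |b|)^3 ≤ 4*|a|^3 + 4*|b|^3 := by
    nlinarith [mul_nonneg (sq_nonneg (|a| - |b|)) (add_nonneg ha hb)]
  linarith

set_option maxHeartbeats 2000000 in
lemma crux (L : ℝ) (hL : 0 < L) {Ω : Type} [m : MeasurableSpace Ω] (P : Measure Ω)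
    [IsProbabilityMeasure P] (𝒢 : Filtration ℝ m) (W₁ W₂ : ℝ → Ω → ℝ)
    (h1 : IsBrownianMotion P 𝒢 W₁) (h2 : IsBrownianMotion P 𝒢 W₂)
    {z : ℝ} (hz0 : 0 < z) (hzP : z ≤ π*L)
    (h0 : ∀ ω, QQ L (W₁ 0 ω - W₂ 0 ω) = z)
    {C : ℝ → ℝ} (hCnn : ∀ t ≥ (0:ℝ), 0 ≤ C t) (hCint : IntegrableOn C (Set.Ici 0))
    (hC : ∀ t ≥ (0:ℝ), (∫ ω, (QQ L (W₁ t ω - W₂ t ω))^2 ∂P) ≤ C t) :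
    gg L z ≤ K2 * ∫ t in Set.Ici (0:ℝ), C t := by
  obtain ⟨hW1m, hW1c, hW1a, hW1i⟩ := h1
  obtain ⟨hW2m, hW2c, hW2a, hW2i⟩ := h2
  have hP : (0:ℝ) < π*L := P_pos hL
  have hAA := AA_pos hL
  have hK2 := K2_pos
  have hK3 := K3_nonneg
  -- the difference process
  have hDm : ∀ t, Measurable (fun ω => W₁ t ω - W₂ t ω) := fun t => (hW1m t).sub (hW2m t)
  have hQm : ∀ t, Measurable (fun ω => QQ L (W₁ t ω - W₂ t ω)) :=
    fun t => (continuous_QQ L).measurable.comp (hDm t)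
  have cont_gg : Continuous (gg L) := by
    unfold gg
    fun_prop
  have hint_bdd : ∀ (f : Ω → ℝ), Measurable f → ∀ B : ℝ, (∀ ω, |f ω| ≤ B) → Integrable f P := by
    intro f hf B hB
    exact ⟨hf.aestronglyMeasurable, HasFiniteIntegral.of_bounded (C := B)
      (ae_of_all _ (fun ω => by rw [Real.norm_eq_abs]; exact hB ω))⟩
  have hQbd : ∀ t ω, QQ L (W₁ t ω - W₂ t ω) ≤ π*L := fun t ω => QQ_le_half hL _
  have hQnn : ∀ t ω, 0 ≤ QQ L (W₁ t ω - W₂ t ω) := fun t ω => QQ_nonneg _ _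
  have hggbd : ∀ t ω, |gg L (QQ L (W₁ t ω - W₂ t ω))| ≤ AA L * (π*L) := by
    intro t ω
    rw [abs_of_nonneg (gg_nonneg hL (hQnn t ω) (hQbd t ω))]
    calc gg L (QQ L (W₁ t ω - W₂ t ω)) ≤ AA L * QQ L (W₁ t ω - W₂ t ω) :=
          gg_le_lin hL (hQnn t ω)
    _ ≤ AA L * (π*L) := mul_le_mul_of_nonneg_left (hQbd t ω) hAA.le
  have hΦint : ∀ t, Integrable (fun ω => gg L (QQ L (W₁ t ω - W₂ t ω))) P :=
    fun t => hint_bdd _ (cont_gg.measurable.comp (hQm t)) _ (hggbd t)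
  have hψint : ∀ t, Integrable (fun ω => (QQ L (W₁ t ω - W₂ t ω))^2) P := by
    intro t
    apply hint_bdd _ ((hQm t).pow measurable_const) ((π*L)^2)
    intro ω
    rw [abs_of_nonneg (sq_nonneg _)]
    exact pow_le_pow_left₀ (hQnn t ω) (hQbd t ω) 2
  -- ψ and Φ
  set ψ : ℝ → ℝ := fun t => ∫ ω, (QQ L (W₁ t ω - W₂ t ω))^2 ∂P with hψdef
  set Φ : ℝ → ℝ := fun t => ∫ ω, gg L (QQ L (W₁ t ω - W₂ t ω)) ∂P with hΦdef
  have hψnn : ∀ t, 0 ≤ ψ t := fun t => integral_nonneg (fun ω => sq_nonneg _)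
  -- THE STEP INEQUALITY
  have step : ∀ s t : ℝ, 0 ≤ s → s ≤ t →
      Φ s - K2*(t-s)*ψ s - 8*(π*L)*K3*(√(t-s))^3 ≤ Φ t := by
    intro s t hs hst
    obtain ⟨hmap1, hind1⟩ := hW1i s t hs hst
    obtain ⟨hmap2, hind2⟩ := hW2i s t hs hst
    have hδ : (0:ℝ) ≤ t - s := by linarith
    have hX₁m : Measurable (fun ω => W₁ t ω - W₁ s ω) := (hW1m t).sub (hW1m s)
    have hX₂m : Measurable (fun ω => W₂ t ω - W₂ s ω) := (hW2m t).sub (hW2m s)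
    obtain ⟨⟨hX₁int, hX₁mean⟩, ⟨hX₁sqint, hX₁sq⟩, ⟨hX₁cbint, hX₁cb⟩⟩ :=
      gauss_moments P hX₁m hδ hmap1
    obtain ⟨⟨hX₂int, hX₂mean⟩, ⟨hX₂sqint, hX₂sq⟩, ⟨hX₂cbint, hX₂cb⟩⟩ :=
      gauss_moments P hX₂m hδ hmap2
    -- 𝒢 s measurable quantities
    have hDs𝒢 : Measurable[𝒢 s] (fun ω => W₁ s ω - W₂ s ω) :=
      ((hW1a s).sub (hW2a s))
    have hY𝒢 : Measurable[𝒢 s] (fun ω => ss L (W₁ s ω - W₂ s ω)) :=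
      (measurable_ss L).comp hDs𝒢
    have hQ2𝒢 : Measurable[𝒢 s] (fun ω => (QQ L (W₁ s ω - W₂ s ω))^2) :=
      (((continuous_QQ L).measurable.comp hDs𝒢).pow measurable_const)
    have hYm : Measurable (fun ω => ss L (W₁ s ω - W₂ s ω)) :=
      (measurable_ss L).comp (hDm s)
    have hYint : Integrable (fun ω => ss L (W₁ s ω - W₂ s ω)) P :=
      hint_bdd _ hYm (AA L) (fun ω => ss_abs_le hL _)
    -- independence
    have hIF1Y : IndepFun (fun ω => W₁ t ω - W₁ s ω) (fun ω => ss L (W₁ s ω - W₂ s ω)) P :=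
      Kernel.indep_of_indep_of_le_right hind1 hY𝒢.comap_le
    have hIF2Y : IndepFun (fun ω => W₂ t ω - W₂ s ω) (fun ω => ss L (W₁ s ω - W₂ s ω)) P :=
      Kernel.indep_of_indep_of_le_right hind2 hY𝒢.comap_le
    have hIF1Q : IndepFun (fun ω => W₁ t ω - W₁ s ω) (fun ω => (QQ L (W₁ s ω - W₂ s ω))^2) P :=
      Kernel.indep_of_indep_of_le_right hind1 hQ2𝒢.comap_le
    have hIF2Q : IndepFun (fun ω => W₂ t ω - W₂ s ω) (fun ω => (QQ L (W₁ s ω - W₂ s ω))^2) P :=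
      Kernel.indep_of_indep_of_le_right hind2 hQ2𝒢.comap_le
    have hIF1Qsq : IndepFun (fun ω => (W₁ t ω - W₁ s ω)^2)
        (fun ω => (QQ L (W₁ s ω - W₂ s ω))^2) P := by
      have := hIF1Q.comp (φ := fun x : ℝ => x^2) (ψ := id)
        (measurable_id.pow measurable_const) measurable_id
      exact this
    have hIF2Qsq : IndepFun (fun ω => (W₂ t ω - W₂ s ω)^2)
        (fun ω => (QQ L (W₁ s ω - W₂ s ω))^2) P := by
      have := hIF2Q.comp (φ := fun x : ℝ => x^2) (ψ := id)
        (measurable_id.pow measurable_const) measurable_id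
      exact this
    -- expectations of products
    have hprod1 : ∫ ω, (W₁ t ω - W₁ s ω) * ss L (W₁ s ω - W₂ s ω) ∂P = 0 := by
      have h := hIF1Y.integral_mul_eq_mul_integral hX₁int.aestronglyMeasurable hYint.aestronglyMeasurable
      have e : ∫ ω, (W₁ t ω - W₁ s ω) * ss L (W₁ s ω - W₂ s ω) ∂P
          = ∫ ω, ((fun ω => W₁ t ω - W₁ s ω) * (fun ω => ss L (W₁ s ω - W₂ s ω))) ω ∂P := rfl
      rw [e, h, hX₁mean, zero_mul]
    have hprod2 : ∫ ω, (W₂ t ω - W₂ s ω) * ss L (W₁ s ω - W₂ s ω) ∂P = 0 := by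
      have h := hIF2Y.integral_mul_eq_mul_integral hX₂int.aestronglyMeasurable hYint.aestronglyMeasurable
      have e : ∫ ω, (W₂ t ω - W₂ s ω) * ss L (W₁ s ω - W₂ s ω) ∂P
          = ∫ ω, ((fun ω => W₂ t ω - W₂ s ω) * (fun ω => ss L (W₁ s ω - W₂ s ω))) ω ∂P := rfl
      rw [e, h, hX₂mean, zero_mul]
    have hprodQ1 : ∫ ω, (W₁ t ω - W₁ s ω)^2 * (QQ L (W₁ s ω - W₂ s ω))^2 ∂P
        = ((t-s)*K2) * ψ s := by
      have h := hIF1Qsq.integral_mul_eq_mul_integral hX₁sqint.aestronglyMeasurable (hψint s).aestronglyMeasurable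
      have e : ∫ ω, (W₁ t ω - W₁ s ω)^2 * (QQ L (W₁ s ω - W₂ s ω))^2 ∂P
          = ∫ ω, ((fun ω => (W₁ t ω - W₁ s ω)^2) * (fun ω => (QQ L (W₁ s ω - W₂ s ω))^2)) ω ∂P := rfl
      rw [e, h, hX₁sq]
    have hprodQ2 : ∫ ω, (W₂ t ω - W₂ s ω)^2 * (QQ L (W₁ s ω - W₂ s ω))^2 ∂P
        = ((t-s)*K2) * ψ s := by
      have h := hIF2Qsq.integral_mul_eq_mul_integral hX₂sqint.aestronglyMeasurable (hψint s).aestronglyMeasurable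
      have e : ∫ ω, (W₂ t ω - W₂ s ω)^2 * (QQ L (W₁ s ω - W₂ s ω))^2 ∂P
          = ∫ ω, ((fun ω => (W₂ t ω - W₂ s ω)^2) * (fun ω => (QQ L (W₁ s ω - W₂ s ω))^2)) ω ∂P := rfl
      rw [e, h, hX₂sq]
    -- integrability of composite terms
    have hT1aint : Integrable (fun ω => (W₁ t ω - W₁ s ω) * ss L (W₁ s ω - W₂ s ω)) P := by
      have := hX₁int.bdd_mul hYm.aestronglyMeasurable
        (ae_of_all _ fun ω => by rw [Real.norm_eq_abs]; exact ss_abs_le hL _)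
      exact this.congr (ae_of_all _ (fun ω => by ring))
    have hT1bint : Integrable (fun ω => (W₂ t ω - W₂ s ω) * ss L (W₁ s ω - W₂ s ω)) P := by
      have := hX₂int.bdd_mul hYm.aestronglyMeasurable
        (ae_of_all _ fun ω => by rw [Real.norm_eq_abs]; exact ss_abs_le hL _)
      exact this.congr (ae_of_all _ (fun ω => by ring))
    have hsqsum : Integrable (fun ω => 2*(W₁ t ω - W₁ s ω)^2 + 2*(W₂ t ω - W₂ s ω)^2) P :=
      (hX₁sqint.const_mul 2).add (hX₂sqint.const_mul 2)
    have hΔsqint : Integrable (fun ω => ((W₁ t ω - W₁ s ω) - (W₂ t ω - W₂ s ω))^2) P := by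
      apply hsqsum.mono' ((hX₁m.sub hX₂m).pow measurable_const).aestronglyMeasurable
      apply ae_of_all
      intro ω
      rw [Real.norm_eq_abs, abs_of_nonneg (sq_nonneg _)]
      simp only [Pi.sub_apply]
      nlinarith [sq_nonneg ((W₁ t ω - W₁ s ω) + (W₂ t ω - W₂ s ω))]
    have hT2int : Integrable (fun ω =>
        (QQ L (W₁ s ω - W₂ s ω))^2 * ((W₁ t ω - W₁ s ω) - (W₂ t ω - W₂ s ω))^2) P := by
      apply hΔsqint.bdd_mul (c := (π*L)^2) ((hQm s).pow measurable_const).aestronglyMeasurable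
      refine ae_of_all _ (fun ω => ?_)
      rw [Real.norm_eq_abs, abs_of_nonneg (sq_nonneg _)]
      exact pow_le_pow_left₀ (hQnn s ω) (hQbd s ω) 2
    have hQ2bd : ∃ B, ∀ ω, ‖(QQ L (W₁ s ω - W₂ s ω))^2‖ ≤ B := by
      refine ⟨(π*L)^2, fun ω => ?_⟩
      rw [Real.norm_eq_abs, abs_of_nonneg (sq_nonneg _)]
      exact pow_le_pow_left₀ (hQnn s ω) (hQbd s ω) 2
    have hT2aint : Integrable (fun ω =>
        (W₁ t ω - W₁ s ω)^2 * (QQ L (W₁ s ω - W₂ s ω))^2) P := by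
      have := hX₁sqint.bdd_mul (((hQm s).pow measurable_const).aestronglyMeasurable) (ae_of_all _ hQ2bd.choose_spec)
      exact this.congr (ae_of_all _ (fun ω => by ring))
    have hT2bint : Integrable (fun ω =>
        (W₂ t ω - W₂ s ω)^2 * (QQ L (W₁ s ω - W₂ s ω))^2) P := by
      have := hX₂sqint.bdd_mul (((hQm s).pow measurable_const).aestronglyMeasurable) (ae_of_all _ hQ2bd.choose_spec)
      exact this.congr (ae_of_all _ (fun ω => by ring))
    have hcbsum : Integrable (fun ω => 4*|W₁ t ω - W₁ s ω|^3 + 4*|W₂ t ω - W₂ s ω|^3) P :=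
      (hX₁cbint.const_mul 4).add (hX₂cbint.const_mul 4)
    have hT3int : Integrable (fun ω => |(W₁ t ω - W₁ s ω) - (W₂ t ω - W₂ s ω)|^3) P := by
      apply hcbsum.mono' ((hX₁m.sub hX₂m).abs.pow measurable_const).aestronglyMeasurable
      apply ae_of_all
      intro ω
      rw [Real.norm_eq_abs, abs_of_nonneg (by positivity)]
      exact cube_abs_sub _ _
    -- pointwise star inequality
    have hstar : ∀ ω,
        gg L (QQ L (W₁ s ω - W₂ s ω))
        + (W₁ t ω - W₁ s ω) * ss L (W₁ s ω - W₂ s ω)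
        - (W₂ t ω - W₂ s ω) * ss L (W₁ s ω - W₂ s ω)
        - 1/4 * ((QQ L (W₁ s ω - W₂ s ω))^2 * ((W₁ t ω - W₁ s ω) - (W₂ t ω - W₂ s ω))^2)
        - (π*L) * |(W₁ t ω - W₁ s ω) - (W₂ t ω - W₂ s ω)|^3
        ≤ gg L (QQ L (W₁ t ω - W₂ t ω)) := by
      intro ω
      have h := star hL (W₁ s ω - W₂ s ω) ((W₁ t ω - W₁ s ω) - (W₂ t ω - W₂ s ω))
      have harg : (W₁ s ω - W₂ s ω) + ((W₁ t ω - W₁ s ω) - (W₂ t ω - W₂ s ω))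
          = W₁ t ω - W₂ t ω := by ring
      rw [harg] at h
      have e1 : ss L (W₁ s ω - W₂ s ω) * ((W₁ t ω - W₁ s ω) - (W₂ t ω - W₂ s ω))
          = (W₁ t ω - W₁ s ω) * ss L (W₁ s ω - W₂ s ω)
            - (W₂ t ω - W₂ s ω) * ss L (W₁ s ω - W₂ s ω) := by ring
      have e2 : (QQ L (W₁ s ω - W₂ s ω))^2/4 * ((W₁ t ω - W₁ s ω) - (W₂ t ω - W₂ s ω))^2
          = 1/4 * ((QQ L (W₁ s ω - W₂ s ω))^2 * ((W₁ t ω - W₁ s ω) - (W₂ t ω - W₂ s ω))^2) := by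
        ring
      rw [e1, e2] at h
      linarith
    -- integrate
    have hIL2 : Integrable (fun ω =>
        gg L (QQ L (W₁ s ω - W₂ s ω))
        + (W₁ t ω - W₁ s ω) * ss L (W₁ s ω - W₂ s ω)) P := (hΦint s).add hT1aint
    have hIL3 : Integrable (fun ω =>
        gg L (QQ L (W₁ s ω - W₂ s ω))
        + (W₁ t ω - W₁ s ω) * ss L (W₁ s ω - W₂ s ω)
        - (W₂ t ω - W₂ s ω) * ss L (W₁ s ω - W₂ s ω)) P := hIL2.sub hT1bint
    have hIL4 : Integrable (fun ω =>
        gg L (QQ L (W₁ s ω - W₂ s ω))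
        + (W₁ t ω - W₁ s ω) * ss L (W₁ s ω - W₂ s ω)
        - (W₂ t ω - W₂ s ω) * ss L (W₁ s ω - W₂ s ω)
        - 1/4 * ((QQ L (W₁ s ω - W₂ s ω))^2 * ((W₁ t ω - W₁ s ω) - (W₂ t ω - W₂ s ω))^2)) P :=
      hIL3.sub (hT2int.const_mul (1/4))
    have hLHSint : Integrable (fun ω =>
        gg L (QQ L (W₁ s ω - W₂ s ω))
        + (W₁ t ω - W₁ s ω) * ss L (W₁ s ω - W₂ s ω)
        - (W₂ t ω - W₂ s ω) * ss L (W₁ s ω - W₂ s ω)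
        - 1/4 * ((QQ L (W₁ s ω - W₂ s ω))^2 * ((W₁ t ω - W₁ s ω) - (W₂ t ω - W₂ s ω))^2)
        - (π*L) * |(W₁ t ω - W₁ s ω) - (W₂ t ω - W₂ s ω)|^3) P :=
      hIL4.sub (hT3int.const_mul (π*L))
    have hmono := integral_mono hLHSint (hΦint t) hstar
    -- compute the LHS integral
    have hsplit : ∫ ω, (gg L (QQ L (W₁ s ω - W₂ s ω))
        + (W₁ t ω - W₁ s ω) * ss L (W₁ s ω - W₂ s ω)
        - (W₂ t ω - W₂ s ω) * ss L (W₁ s ω - W₂ s ω)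
        - 1/4 * ((QQ L (W₁ s ω - W₂ s ω))^2 * ((W₁ t ω - W₁ s ω) - (W₂ t ω - W₂ s ω))^2)
        - (π*L) * |(W₁ t ω - W₁ s ω) - (W₂ t ω - W₂ s ω)|^3) ∂P
        = Φ s + 0 - 0
          - 1/4 * ∫ ω, ((QQ L (W₁ s ω - W₂ s ω))^2 * ((W₁ t ω - W₁ s ω) - (W₂ t ω - W₂ s ω))^2) ∂P
          - (π*L) * ∫ ω, |(W₁ t ω - W₁ s ω) - (W₂ t ω - W₂ s ω)|^3 ∂P := by
      rw [integral_sub hIL4 (hT3int.const_mul (π*L)),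
          integral_sub hIL3 (hT2int.const_mul (1/4)),
          integral_sub hIL2 hT1bint,
          integral_add (hΦint s) hT1aint,
          hprod1, hprod2, integral_const_mul, integral_const_mul]
    rw [hsplit] at hmono
    -- bound the quadratic term
    have hquad : ∫ ω, ((QQ L (W₁ s ω - W₂ s ω))^2 * ((W₁ t ω - W₁ s ω) - (W₂ t ω - W₂ s ω))^2) ∂P
        ≤ 4*((t-s)*K2*ψ s) := by
      have hmono2 : ∫ ω, ((QQ L (W₁ s ω - W₂ s ω))^2 * ((W₁ t ω - W₁ s ω) - (W₂ t ω - W₂ s ω))^2) ∂P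
          ≤ ∫ ω, (2*((W₁ t ω - W₁ s ω)^2 * (QQ L (W₁ s ω - W₂ s ω))^2)
              + 2*((W₂ t ω - W₂ s ω)^2 * (QQ L (W₁ s ω - W₂ s ω))^2)) ∂P := by
        apply integral_mono hT2int ((hT2aint.const_mul 2).add (hT2bint.const_mul 2))
        intro ω
        dsimp only [Pi.add_apply]
        have hq := sq_nonneg (QQ L (W₁ s ω - W₂ s ω))
        nlinarith [sq_nonneg ((W₁ t ω - W₁ s ω) + (W₂ t ω - W₂ s ω)),
          mul_nonneg hq (sq_nonneg ((W₁ t ω - W₁ s ω) + (W₂ t ω - W₂ s ω)))]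
      rw [integral_add (hT2aint.const_mul 2) (hT2bint.const_mul 2),
        integral_const_mul, integral_const_mul, hprodQ1, hprodQ2] at hmono2
      linarith
    -- bound the cubic term
    have hcube : ∫ ω, |(W₁ t ω - W₁ s ω) - (W₂ t ω - W₂ s ω)|^3 ∂P
        ≤ 8*((√(t-s))^3 * K3) := by
      have hmono3 : ∫ ω, |(W₁ t ω - W₁ s ω) - (W₂ t ω - W₂ s ω)|^3 ∂P
          ≤ ∫ ω, (4*|W₁ t ω - W₁ s ω|^3 + 4*|W₂ t ω - W₂ s ω|^3) ∂P := by
        apply integral_mono hT3int hcbsum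
        intro ω
        exact cube_abs_sub _ _
      rw [integral_add (hX₁cbint.const_mul 4) (hX₂cbint.const_mul 4),
        integral_const_mul, integral_const_mul, hX₁cb, hX₂cb] at hmono3
      linarith
    have hsqrt3 : 0 ≤ (√(t-s))^3 := by positivity
    nlinarith [hmono, hquad, hcube, mul_le_mul_of_nonneg_left hquad (by norm_num : (0:ℝ) ≤ 1/4),
      mul_le_mul_of_nonneg_left hcube hP.le]
  -- continuity of ψ
  have hψ_cont : Continuous ψ := by
    rw [continuous_iff_seqContinuous]
    intro u t hu
    have : Filter.Tendsto (fun n => ∫ ω, (QQ L (W₁ (u n) ω - W₂ (u n) ω))^2 ∂P)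
        Filter.atTop (nhds (∫ ω, (QQ L (W₁ t ω - W₂ t ω))^2 ∂P)) := by
      apply tendsto_integral_of_dominated_convergence (bound := fun _ => (π*L)^2)
      · intro n; exact ((hQm (u n)).pow measurable_const).aestronglyMeasurable
      · exact integrable_const _
      · intro n
        apply ae_of_all
        intro ω
        rw [Real.norm_eq_abs, abs_of_nonneg (sq_nonneg _)]
        exact pow_le_pow_left₀ (hQnn (u n) ω) (hQbd (u n) ω) 2
      · filter_upwards [hW1c, hW2c] with ω hc1 hc2
        have hDcont : Continuous (fun τ => W₁ τ ω - W₂ τ ω) := hc1.sub hc2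
        have hcont : Continuous (fun τ => (QQ L (W₁ τ ω - W₂ τ ω))^2) :=
          ((continuous_QQ L).comp hDcont).pow 2
        exact (hcont.tendsto t).comp hu
    exact this
  -- value at 0
  have hΦ0 : Φ 0 = gg L z := by
    have hc : ∀ ω, gg L (QQ L (W₁ 0 ω - W₂ 0 ω)) = gg L z := fun ω => by rw [h0 ω]
    calc Φ 0 = ∫ _ω, gg L z ∂P := integral_congr_ae (ae_of_all _ hc)
    _ = gg L z := by simp
  -- interval integral of ψ is dominated by the C-integral
  have hIciC : 0 ≤ ∫ t in Set.Ici (0:ℝ), C t := by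
    apply setIntegral_nonneg measurableSet_Ici
    intro t ht
    exact hCnn t ht
  have hψC : ∀ u ≥ (0:ℝ), ψ u ≤ C u := fun u hu => hC u hu
  have hTint : ∀ T : ℝ, 0 ≤ T → (∫ u in (0:ℝ)..T, ψ u) ≤ ∫ t in Set.Ici (0:ℝ), C t := by
    intro T hT
    rw [intervalIntegral.integral_of_le hT]
    have hsub : Set.Ioc (0:ℝ) T ⊆ Set.Ici (0:ℝ) := fun u hu => le_of_lt hu.1
    calc ∫ u in Set.Ioc (0:ℝ) T, ψ u ≤ ∫ u in Set.Ioc (0:ℝ) T, C u := by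
          apply setIntegral_mono_on (hψ_cont.integrableOn_Ioc) (hCint.mono_set hsub)
            measurableSet_Ioc
          intro u hu
          exact hψC u (le_of_lt hu.1)
    _ ≤ ∫ t in Set.Ici (0:ℝ), C t := by
          apply setIntegral_mono_set hCint
          · exact (ae_restrict_mem measurableSet_Ici).mono (fun u hu => hCnn u hu)
          · exact HasSubset.Subset.eventuallyLE hsub
  -- tail selection
  have tail : ∀ ε > (0:ℝ), ∃ T ≥ (0:ℝ), C T < ε := by
    intro ε hε
    by_contra hcon
    push_neg at hcon
    have hlt := hCint.measure_ge_lt_top hε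
    have htop : (volume.restrict (Set.Ici (0:ℝ))) {t | ε ≤ C t} = ⊤ := by
      rw [Measure.restrict_apply' measurableSet_Ici]
      have hsub : Set.Ici (0:ℝ) ⊆ {t | ε ≤ C t} ∩ Set.Ici 0 :=
        fun u hu => ⟨hcon u hu, hu⟩
      refine top_le_iff.mp ?_
      calc (⊤:ℝ≥0∞) = volume (Set.Ici (0:ℝ)) := by simp
      _ ≤ volume ({t | ε ≤ C t} ∩ Set.Ici 0) := measure_mono hsub
    rw [htop] at hlt
    exact lt_irrefl _ hlt
  -- telescoping
  have tele : ∀ (δ : ℝ), 0 ≤ δ → ∀ (j : ℕ),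
      Φ 0 - K2*δ*(∑ k ∈ Finset.range j, ψ ((k:ℝ)*δ)) - (j:ℝ)*(8*(π*L)*K3*(√δ)^3)
        ≤ Φ ((j:ℝ)*δ) := by
    intro δ hδ j
    induction j with
    | zero => simp
    | succ j ih =>
      have hstep := step ((j:ℝ)*δ) (((j:ℝ)+1)*δ) (by positivity) (by nlinarith)
      have he : ((j:ℝ)+1)*δ - (j:ℝ)*δ = δ := by ring
      rw [he] at hstep
      rw [Finset.sum_range_succ]
      push_cast
      linarith
  -- final ε-argument
  have main : ∀ ε > (0:ℝ), gg L z ≤ K2 * (∫ t in Set.Ici (0:ℝ), C t) + ε := by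
    intro ε hε
    obtain ⟨c, hc, hc1⟩ : ∃ c > (0:ℝ), AA L * c ≤ ε/4 := by
      refine ⟨(ε/4)/(AA L), by positivity, ?_⟩
      rw [mul_comm, div_mul_cancel₀]
      exact hAA.ne'
    obtain ⟨T, hT0, hTc⟩ := tail (c^2) (by positivity)
    -- bound on Φ T
    have hΦT : Φ T ≤ ε/2 := by
      have hpt : ∀ ω, gg L (QQ L (W₁ T ω - W₂ T ω))
          ≤ AA L/(2*c) * (QQ L (W₁ T ω - W₂ T ω))^2 + AA L * c/2 := by
        intro ω
        have hq1 := hQnn T ω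
        have h2c : (0:ℝ) < 2*c := by linarith
        have h7 : 2*c*QQ L (W₁ T ω - W₂ T ω) ≤ (QQ L (W₁ T ω - W₂ T ω))^2 + c^2 := by
          nlinarith [sq_nonneg (QQ L (W₁ T ω - W₂ T ω) - c)]
        have h6 : QQ L (W₁ T ω - W₂ T ω) ≤ (QQ L (W₁ T ω - W₂ T ω))^2/(2*c) + c/2 := by
          have e : (QQ L (W₁ T ω - W₂ T ω))^2/(2*c) + c/2
              = ((QQ L (W₁ T ω - W₂ T ω))^2 + c^2)/(2*c) := by
            field_simp
          rw [e, le_div_iff₀ h2c]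
          linarith
        calc gg L (QQ L (W₁ T ω - W₂ T ω)) ≤ AA L * QQ L (W₁ T ω - W₂ T ω) :=
              gg_le_lin hL hq1
        _ ≤ AA L * ((QQ L (W₁ T ω - W₂ T ω))^2/(2*c) + c/2) :=
              mul_le_mul_of_nonneg_left h6 hAA.le
        _ = AA L/(2*c) * (QQ L (W₁ T ω - W₂ T ω))^2 + AA L * c/2 := by ring
      have hint2 : Integrable (fun ω => AA L/(2*c) * (QQ L (W₁ T ω - W₂ T ω))^2 + AA L * c/2) P :=
        ((hψint T).const_mul _).add (integrable_const _)
      have := integral_mono (hΦint T) hint2 hpt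
      rw [integral_add ((hψint T).const_mul _) (integrable_const _), integral_const_mul,
        integral_const] at this
      simp only [measure_univ, probReal_univ, ENNReal.toReal_one, smul_eq_mul, one_mul] at this
      have hψT : ψ T ≤ c^2 := le_of_lt (lt_of_le_of_lt (hψC T hT0) hTc)
      have hb1 : AA L/(2*c) * ψ T ≤ AA L * c/2 := by
        have h2c : (0:ℝ) < 2*c := by linarith
        calc AA L/(2*c) * ψ T ≤ AA L/(2*c) * c^2 :=
              mul_le_mul_of_nonneg_left hψT (by positivity)
        _ = AA L * c/2 := by field_simp
      calc Φ T ≤ AA L/(2*c) * ψ T + AA L * c/2 := this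
      _ ≤ AA L * c/2 + AA L * c/2 := by linarith
      _ = AA L * c := by ring
      _ ≤ ε/4 := hc1
      _ ≤ ε/2 := by linarith
    -- modulus of continuity for ψ on [0,T]
    obtain ⟨ε₂, hε₂, hKTe⟩ : ∃ ε₂ > (0:ℝ), K2 * T * ε₂ ≤ ε/8 := by
      refine ⟨(ε/8)/(K2*T + 1), by positivity, ?_⟩
      have h1 : (0:ℝ) < K2*T + 1 := by nlinarith [mul_nonneg hK2.le hT0]
      have h3 : (K2*T)/(K2*T+1) ≤ 1 := by
        rw [div_le_one h1]
        linarith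
      calc K2*T*((ε/8)/(K2*T+1)) = (ε/8)*((K2*T)/(K2*T+1)) := by ring
      _ ≤ (ε/8)*1 := mul_le_mul_of_nonneg_left h3 (by positivity)
      _ = ε/8 := by ring
    have hUC := (isCompact_Icc (a := (0:ℝ)) (b := T)).uniformContinuousOn_of_continuous
      hψ_cont.continuousOn
    obtain ⟨δ₀, hδ₀, hδ₀p⟩ := Metric.uniformContinuousOn_iff.mp hUC ε₂ hε₂
    -- choose n
    obtain ⟨m2, hm2, hm2e⟩ : ∃ m2 > (0:ℝ), 8*(π*L)*K3*T*√m2 ≤ ε/8 := by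
      refine ⟨((ε/8)/(8*(π*L)*K3*T + 1))^2, by positivity, ?_⟩
      have h1 : (0:ℝ) < 8*(π*L)*K3*T + 1 := by positivity
      rw [Real.sqrt_sq (by positivity)]
      have h3 : (8*(π*L)*K3*T)/(8*(π*L)*K3*T+1) ≤ 1 := by
        rw [div_le_one h1]
        have h2 : (0:ℝ) ≤ 8*(π*L)*K3*T := by positivity
        linarith
      calc 8*(π*L)*K3*T*((ε/8)/(8*(π*L)*K3*T+1))
          = (ε/8)*((8*(π*L)*K3*T)/(8*(π*L)*K3*T+1)) := by ring
      _ ≤ (ε/8)*1 := mul_le_mul_of_nonneg_left h3 (by positivity)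
      _ = ε/8 := by ring
    set mm := min δ₀ m2 with hmm
    have hmmpos : 0 < mm := lt_min hδ₀ hm2
    obtain ⟨n₀, hn₀⟩ := exists_nat_gt (T/mm)
    set n : ℕ := n₀ + 1 with hn
    have hnpos : 0 < (n:ℝ) := by positivity
    set δ := T/(n:ℝ) with hδdef
    have hδnn : 0 ≤ δ := div_nonneg hT0 hnpos.le
    have hδmm : δ < mm := by
      have h2 : T/mm < (n:ℝ) := by
        rw [hn]
        push_cast
        linarith
      have h1 : T < (n:ℝ)*mm := by
        calc T = (T/mm)*mm := by field_simp
        _ < (n:ℝ)*mm := mul_lt_mul_of_pos_right h2 hmmpos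
      rw [hδdef, div_lt_iff₀ hnpos]
      linarith
    have hNδ : (n:ℝ)*δ = T := by
      rw [hδdef]; field_simp
    -- Riemann sum bound
    have hsum : K2*δ*(∑ k ∈ Finset.range n, ψ ((k:ℝ)*δ))
        ≤ K2 * ((∫ u in (0:ℝ)..T, ψ u) + T*ε₂) := by
      have hgrid : ∀ k : ℕ, k < n → δ * ψ ((k:ℝ)*δ)
          ≤ (∫ u in ((k:ℝ)*δ)..(((k:ℝ)+1)*δ), ψ u) + δ*ε₂ := by
        intro k hk
        have hk1 : ((k:ℝ)+1)*δ ≤ T := by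
          rw [← hNδ]
          have : (k:ℝ)+1 ≤ (n:ℝ) := by push_cast; exact_mod_cast Nat.succ_le_of_lt hk
          nlinarith
        have hk0 : 0 ≤ (k:ℝ)*δ := by positivity
        have hmem : (k:ℝ)*δ ∈ Set.Icc (0:ℝ) T := ⟨hk0, by nlinarith⟩
        have hub : ∀ x ∈ Set.Icc ((k:ℝ)*δ) (((k:ℝ)+1)*δ), ψ ((k:ℝ)*δ) ≤ ψ x + ε₂ := by
          intro x hx
          have hxmem : x ∈ Set.Icc (0:ℝ) T := ⟨le_trans hk0 hx.1, le_trans hx.2 hk1⟩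
          have hdist : dist ((k:ℝ)*δ) x < δ₀ := by
            rw [Real.dist_eq, abs_sub_comm, abs_of_nonneg (by linarith [hx.1])]
            have : x - (k:ℝ)*δ ≤ δ := by nlinarith [hx.2]
            calc x - (k:ℝ)*δ ≤ δ := this
            _ < mm := hδmm
            _ ≤ δ₀ := min_le_left _ _
          have := hδ₀p ((k:ℝ)*δ) hmem x hxmem hdist
          rw [Real.dist_eq] at this
          have habs := abs_sub_le_iff.mp this.le
          linarith [habs.1]
        have hIleft : (∫ _u in ((k:ℝ)*δ)..(((k:ℝ)+1)*δ), ψ ((k:ℝ)*δ)) = δ * ψ ((k:ℝ)*δ) := by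
          rw [intervalIntegral.integral_const]
          have : ((k:ℝ)+1)*δ - (k:ℝ)*δ = δ := by ring
          rw [this, smul_eq_mul]
        rw [← hIleft]
        have hab : (k:ℝ)*δ ≤ ((k:ℝ)+1)*δ := by nlinarith
        have hmono := intervalIntegral.integral_mono_on (μ := volume) hab
          (intervalIntegrable_const)
          ((hψ_cont.intervalIntegrable _ _).add intervalIntegrable_const) hub
        calc (∫ _u in ((k:ℝ)*δ)..(((k:ℝ)+1)*δ), ψ ((k:ℝ)*δ))
            ≤ ∫ u in ((k:ℝ)*δ)..(((k:ℝ)+1)*δ), (ψ u + ε₂) := hmono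
        _ = (∫ u in ((k:ℝ)*δ)..(((k:ℝ)+1)*δ), ψ u) + (((k:ℝ)+1)*δ - (k:ℝ)*δ) • ε₂ := by
            rw [intervalIntegral.integral_add (hψ_cont.intervalIntegrable _ _)
              intervalIntegrable_const, intervalIntegral.integral_const]
        _ = (∫ u in ((k:ℝ)*δ)..(((k:ℝ)+1)*δ), ψ u) + δ*ε₂ := by
            rw [smul_eq_mul, show ((k:ℝ)+1)*δ - (k:ℝ)*δ = δ by ring]
      have hadj : ∑ k ∈ Finset.range n, (∫ u in ((k:ℝ)*δ)..(((k:ℝ)+1)*δ), ψ u)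
          = ∫ u in (0:ℝ)..T, ψ u := by
        have h := intervalIntegral.sum_integral_adjacent_intervals
          (f := ψ) (μ := volume) (a := fun k : ℕ => (k:ℝ)*δ) (n := n)
          (fun k _ => hψ_cont.intervalIntegrable _ _)
        calc ∑ k ∈ Finset.range n, (∫ u in ((k:ℝ)*δ)..(((k:ℝ)+1)*δ), ψ u)
            = ∑ k ∈ Finset.range n, (∫ u in ((k:ℝ)*δ)..((((k+1):ℕ):ℝ)*δ), ψ u) := by
              apply Finset.sum_congr rfl
              intro k _
              have e : (((k+1):ℕ):ℝ) = (k:ℝ)+1 := by push_cast; ring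
              rw [e]
        _ = ∫ u in (((0:ℕ):ℝ)*δ)..((n:ℝ)*δ), ψ u := h
        _ = ∫ u in (0:ℝ)..T, ψ u := by
              rw [show (((0:ℕ):ℝ)*δ) = 0 by simp, hNδ]
      have hsum1 : ∑ k ∈ Finset.range n, δ * ψ ((k:ℝ)*δ)
          ≤ (∫ u in (0:ℝ)..T, ψ u) + T*ε₂ := by
        calc ∑ k ∈ Finset.range n, δ * ψ ((k:ℝ)*δ)
            ≤ ∑ k ∈ Finset.range n, ((∫ u in ((k:ℝ)*δ)..(((k:ℝ)+1)*δ), ψ u) + δ*ε₂) :=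
              Finset.sum_le_sum (fun k hk => hgrid k (Finset.mem_range.mp hk))
        _ = (∑ k ∈ Finset.range n, (∫ u in ((k:ℝ)*δ)..(((k:ℝ)+1)*δ), ψ u)) + n*(δ*ε₂) := by
              rw [Finset.sum_add_distrib, Finset.sum_const, Finset.card_range]
              rw [nsmul_eq_mul]
        _ = (∫ u in (0:ℝ)..T, ψ u) + T*ε₂ := by
              rw [hadj]
              congr 1
              rw [← mul_assoc, hNδ]
      calc K2*δ*(∑ k ∈ Finset.range n, ψ ((k:ℝ)*δ))
          = K2 * (∑ k ∈ Finset.range n, δ * ψ ((k:ℝ)*δ)) := by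
            rw [Finset.mul_sum, Finset.mul_sum]
            apply Finset.sum_congr rfl
            intro k _
            ring
      _ ≤ K2 * ((∫ u in (0:ℝ)..T, ψ u) + T*ε₂) := mul_le_mul_of_nonneg_left hsum1 hK2.le
    -- bound the cubic error
    have hcub2 : (n:ℝ)*(8*(π*L)*K3*(√δ)^3) ≤ ε/8 := by
      have hs3 : (√δ)^3 = δ*√δ := by
        rw [pow_succ, Real.sq_sqrt hδnn]
      calc (n:ℝ)*(8*(π*L)*K3*(√δ)^3) = 8*(π*L)*K3*((n:ℝ)*δ)*√δ := by rw [hs3]; ring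
      _ = 8*(π*L)*K3*T*√δ := by rw [hNδ]
      _ ≤ 8*(π*L)*K3*T*√m2 := by
            apply mul_le_mul_of_nonneg_left _ (by positivity)
            exact Real.sqrt_le_sqrt (le_of_lt (lt_of_lt_of_le hδmm (min_le_right _ _)))
      _ ≤ ε/8 := hm2e
    -- combine everything
    have hteleT := tele δ hδnn n
    rw [hNδ] at hteleT
    have hint0T := hTint T hT0
    have hK2T := mul_le_mul_of_nonneg_left hint0T hK2.le
    calc gg L z = Φ 0 := hΦ0.symm
    _ ≤ Φ T + K2*δ*(∑ k ∈ Finset.range n, ψ ((k:ℝ)*δ)) + (n:ℝ)*(8*(π*L)*K3*(√δ)^3) := by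
          linarith
    _ ≤ ε/2 + K2 * ((∫ u in (0:ℝ)..T, ψ u) + T*ε₂) + ε/8 := by
          linarith
    _ = ε/2 + K2 * (∫ u in (0:ℝ)..T, ψ u) + K2*T*ε₂ + ε/8 := by ring
    _ ≤ ε/2 + K2 * (∫ t in Set.Ici (0:ℝ), C t) + ε/8 + ε/8 := by
          linarith
    _ ≤ K2 * (∫ t in Set.Ici (0:ℝ), C t) + ε := by linarith
  exact le_of_forall_pos_le_add main

end BMAux


/-- **Square-root lower bound on the initial-distance dependence of co-adapted
couplings.** Suppose `α : (0, πL] → ℝ⁺` and an integrable `β : [0,∞) → ℝ⁺` are such that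
for every `z ∈ (0, πL]` there exist two standard Brownian motions `W¹, W²` on the torus
`𝕋 = ℝ/(2πLℤ)` with a common filtration, with `|W¹_0 - W²_0|_𝕋 = z` and
`E[|W¹_t - W²_t|²_𝕋] ≤ α(z)² β(t)` for all `t ≥ 0`. Then there is `c > 0`, depending
only on `L`, with `α(z) ≥ c ‖β‖_{L¹}^{-1/2} √z` for all `z ∈ (0, πL]`. -/
theorem coadapted_coupling_sqrt_lower_bound
    (L : ℝ) (hL : 0 < L) (α β : ℝ → ℝ)
    (hα : ∀ z ∈ Set.Ioc 0 (π * L), 0 < α z)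
    (hβpos : ∀ t ≥ (0:ℝ), 0 ≤ β t)
    (hβint : IntegrableOn β (Set.Ici 0))
    (hcoupling : ∀ z ∈ Set.Ioc 0 (π * L),
      ∃ (Ω : Type) (m : MeasurableSpace Ω) (P : Measure Ω) (_ : IsProbabilityMeasure P)
        (𝒢 : Filtration ℝ m) (W₁ W₂ : ℝ → Ω → ℝ),
        IsBrownianMotion P 𝒢 W₁ ∧ IsBrownianMotion P 𝒢 W₂ ∧
        (∀ ω, ‖((W₁ 0 ω - W₂ 0 ω : ℝ) : AddCircle (2 * π * L))‖ = z) ∧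
        ∀ t ≥ (0:ℝ),
          ∫ ω, ‖((W₁ t ω - W₂ t ω : ℝ) : AddCircle (2 * π * L))‖ ^ 2 ∂P
            ≤ α z ^ 2 * β t) :
    ∃ c > (0:ℝ), ∀ z ∈ Set.Ioc 0 (π * L),
      α z ≥ c * (∫ t in Set.Ici (0:ℝ), β t) ^ (-(1:ℝ)/2) * sqrt z := by
  have hP : (0:ℝ) < π * L := BMAux.P_pos hL
  have hK2 : (0:ℝ) < BMAux.K2 := BMAux.K2_pos
  refine ⟨Real.sqrt ((π*L)^3/(8*BMAux.K2)), Real.sqrt_pos.mpr (by positivity), ?_⟩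
  intro z hz
  obtain ⟨hz0, hzP⟩ := hz
  have hαz : 0 < α z := hα z ⟨hz0, hzP⟩
  obtain ⟨Ω, m, P, hProb, 𝒢, W₁, W₂, hBM1, hBM2, h0, hbd⟩ := hcoupling z ⟨hz0, hzP⟩
  haveI := hProb
  -- apply the crux lemma with C t := α z ^ 2 * β t
  have hkey : BMAux.gg L z ≤ BMAux.K2 * ∫ t in Set.Ici (0:ℝ), (α z ^ 2 * β t) := by
    apply BMAux.crux L hL P 𝒢 W₁ W₂ hBM1 hBM2 hz0 hzP h0
    · intro t ht
      exact mul_nonneg (sq_nonneg _) (hβpos t ht)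
    · exact hβint.const_mul _
    · intro t ht
      exact hbd t ht
  rw [integral_const_mul] at hkey
  set I := ∫ t in Set.Ici (0:ℝ), β t with hIdef
  have hglow : (π*L)^3/8 * z ≤ BMAux.gg L z := BMAux.gg_lower hL hz0.le hzP
  have hchain : (π*L)^3/8 * z ≤ BMAux.K2 * (α z ^ 2 * I) := le_trans hglow hkey
  have hIpos : 0 < I := by
    by_contra hcon
    push_neg at hcon
    have h1 : BMAux.K2 * (α z ^ 2 * I) ≤ 0 := by
      apply mul_nonpos_of_nonneg_of_nonpos hK2.le
      exact mul_nonpos_of_nonneg_of_nonpos (sq_nonneg _) hcon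
    have h2 : (0:ℝ) < (π*L)^3/8*z := by positivity
    linarith
  -- rewrite the rpow
  have hrw : I ^ (-(1:ℝ)/2) = (Real.sqrt I)⁻¹ := by
    rw [show (-(1:ℝ)/2) = -(1/2) by norm_num, Real.rpow_neg hIpos.le,
      ← Real.sqrt_eq_rpow]
  rw [hrw]
  -- main bound
  have h1 : ((π*L)^3/(8*BMAux.K2)) * z * I⁻¹ ≤ (α z)^2 := by
    have e : ((π*L)^3/(8*BMAux.K2)) * z * I⁻¹ = ((π*L)^3/8 * z) / (BMAux.K2 * I) := by
      field_simp
    rw [e, div_le_iff₀ (mul_pos hK2 hIpos)]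
    calc (π*L)^3/8 * z ≤ BMAux.K2 * (α z ^ 2 * I) := hchain
    _ = α z ^ 2 * (BMAux.K2 * I) := by ring
  have h2 : Real.sqrt (((π*L)^3/(8*BMAux.K2)) * z * I⁻¹) ≤ α z := by
    calc Real.sqrt (((π*L)^3/(8*BMAux.K2)) * z * I⁻¹) ≤ Real.sqrt ((α z)^2) :=
          Real.sqrt_le_sqrt h1
    _ = α z := Real.sqrt_sq hαz.le
  have h3 : Real.sqrt (((π*L)^3/(8*BMAux.K2)) * z * I⁻¹)
      = Real.sqrt ((π*L)^3/(8*BMAux.K2)) * (Real.sqrt I)⁻¹ * Real.sqrt z := by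
    rw [Real.sqrt_mul (by positivity), Real.sqrt_mul (by positivity), Real.sqrt_inv]
    ring
  rw [ge_iff_le, ← h3]
  exact h2

end BMAuxAll
end
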